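/- Let n be an integer, g ≥ 2, and c₁, ..., c_k ∈ BS(1,n). The nonorientable equation x₁² ⋯ x_g² ∏_{i=1}^k z_i⁻¹ c_i z_i = 1 has a solution in BS(1,n) if and only if σ_t(c₁⋯c_k) is even, and moreover n is even or σ_a(c₁⋯c_k) is even. -/

import Mathlib

/-- Relators of the Baumslag–Solitar group BS(1,n) = ⟨a,t | t⁻¹ a t = aⁿ⟩,
with `false` standing for `a` and `true` for `t`. -/
def BSrels (n : ℤ) : Set (FreeGroup Bool) :=
  {(FreeGroup.of true)⁻¹ * FreeGroup.of false * FreeGroup.of true *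
    (FreeGroup.of false ^ n)⁻¹}

/-- The Baumslag–Solitar group BS(1,n). -/
abbrev BS (n : ℤ) := PresentedGroup (BSrels n)

/-- The `a`-exponent sum of a word on `{a, t}`. -/
def sigmaA (w : FreeGroup Bool) : ℤ :=
  Multiplicative.toAdd
    (FreeGroup.lift (fun b => Multiplicative.ofAdd (if b then (0 : ℤ) else 1)) w)

/-- The `t`-exponent sum of a word on `{a, t}`. -/
def sigmaT (w : FreeGroup Bool) : ℤ :=
  Multiplicative.toAdd
    (FreeGroup.lift (fun b => Multiplicative.ofAdd (if b then (1 : ℤ) else 0)) w)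

namespace BSaux

variable (n : ℤ)

noncomputable def T : BS n := PresentedGroup.of true
noncomputable def A : BS n := PresentedGroup.of false

lemma rel : (T n)⁻¹ * A n * (T n) = (A n) ^ n := by
  have h : PresentedGroup.mk (BSrels n)
      ((FreeGroup.of true)⁻¹ * FreeGroup.of false * FreeGroup.of true *
        (FreeGroup.of false ^ n)⁻¹) = 1 :=
    (QuotientGroup.eq_one_iff _).2 (Subgroup.subset_normalClosure rfl)
  simp only [map_mul, map_inv, map_zpow] at h
  have := mul_eq_one_iff_eq_inv.1 h
  simpa [T, A, PresentedGroup.of] using this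

/-- `Aj j = t^j a t^{-j}`. -/
noncomputable def Aj (j : ℤ) : BS n := T n ^ j * A n * T n ^ (-j)

lemma Aj_zpow (j e : ℤ) : Aj n j ^ e = T n ^ j * A n ^ e * T n ^ (-j) := by
  have h := map_zpow (MulAut.conj (T n ^ j)) (A n) e
  simp only [MulAut.conj_apply] at h
  simp only [Aj, zpow_neg]
  rw [← h]

lemma Aj_succ (j : ℤ) : Aj n j = Aj n (j + 1) ^ n := by
  rw [Aj_zpow, ← rel n]
  simp only [Aj]
  group

lemma Aj_tower (d : ℕ) (j : ℤ) : Aj n (j - d) = Aj n j ^ ((n : ℤ) ^ d) := by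
  induction d generalizing j with
  | zero => simp
  | succ d ih =>
    have h1 : (j - (d + 1 : ℕ) : ℤ) = (j - d) - 1 := by push_cast; ring
    have h2 : Aj n ((j - d) - 1) = Aj n (j - d) ^ n := by
      have := Aj_succ n ((j - d) - 1)
      simpa using this
    rw [h1, h2, ih, ← zpow_mul]
    norm_num [pow_succ]

lemma Aj_le {i j : ℤ} (h : i ≤ j) : Aj n i = Aj n j ^ ((n : ℤ) ^ (j - i).toNat) := by
  have h2 := Aj_tower n (j - i).toNat j
  rwa [show (j - ((j - i).toNat : ℤ)) = i by omega] at h2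

lemma shift (s j e : ℤ) : T n ^ s * Aj n j ^ e * T n ^ (-s) = Aj n (j + s) ^ e := by
  rw [Aj_zpow, Aj_zpow]
  have : (- (j + s)) = (-s) + (-j) := by ring
  rw [this, zpow_add, zpow_add]
  group

lemma comb (i j e1 e2 : ℤ) : ∃ L e : ℤ, Aj n i ^ e1 * Aj n j ^ e2 = Aj n L ^ e := by
  refine ⟨max i j, e1 * (n : ℤ) ^ ((max i j) - i).toNat + e2 * (n : ℤ) ^ ((max i j) - j).toNat, ?_⟩
  rw [Aj_le n (le_max_left i j), Aj_le n (le_max_right i j), ← zpow_mul, ← zpow_mul, ← zpow_add]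
  congr 1
  ring

lemma decomp (u : FreeGroup Bool) :
    ∃ L e m : ℤ, PresentedGroup.mk (BSrels n) u = Aj n L ^ e * T n ^ m := by
  induction u using FreeGroup.induction_on with
  | C1 => exact ⟨0, 0, 0, by simp⟩
  | of b =>
    cases b
    · exact ⟨0, 1, 0, by
        show PresentedGroup.mk (BSrels n) (FreeGroup.of false) = _
        simp [Aj, A, PresentedGroup.of]⟩
    · exact ⟨0, 0, 1, by
        show PresentedGroup.mk (BSrels n) (FreeGroup.of true) = _
        simp [T, PresentedGroup.of]⟩
  | inv_of b _ =>
    cases b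
    · exact ⟨0, -1, 0, by
        show PresentedGroup.mk (BSrels n) (FreeGroup.of false)⁻¹ = _
        rw [Aj_zpow]
        simp [A, PresentedGroup.of]⟩
    · exact ⟨0, 0, -1, by
        show PresentedGroup.mk (BSrels n) (FreeGroup.of true)⁻¹ = _
        simp [T, PresentedGroup.of]⟩
  | mul u v hu hv =>
    obtain ⟨L1, e1, m1, h1⟩ := hu
    obtain ⟨L2, e2, m2, h2⟩ := hv
    obtain ⟨L, e, hLe⟩ := comb n L1 (L2 + m1) e1 e2
    refine ⟨L, e, m1 + m2, ?_⟩
    rw [map_mul, h1, h2]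
    calc Aj n L1 ^ e1 * T n ^ m1 * (Aj n L2 ^ e2 * T n ^ m2)
        = Aj n L1 ^ e1 * (T n ^ m1 * Aj n L2 ^ e2 * T n ^ (-m1)) * (T n ^ m1 * T n ^ m2) := by
          group
      _ = Aj n L1 ^ e1 * Aj n (L2 + m1) ^ e2 * T n ^ (m1 + m2) := by rw [shift, ← zpow_add]
      _ = Aj n L ^ e * T n ^ (m1 + m2) := by rw [hLe]

noncomputable def phiT : BS n →* Multiplicative ℤ :=
  PresentedGroup.toGroup (f := fun b => Multiplicative.ofAdd (if b then (1 : ℤ) else 0)) (by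
    intro r hr
    rw [BSrels, Set.mem_singleton_iff] at hr
    subst hr
    simp only [map_mul, map_inv, map_zpow, FreeGroup.lift_apply_of, if_true, if_false]
    simp [← ofAdd_zsmul])

lemma phiT_mk (u : FreeGroup Bool) :
    phiT n (PresentedGroup.mk (BSrels n) u) =
      FreeGroup.lift (fun b => Multiplicative.ofAdd (if b then (1 : ℤ) else 0)) u := rfl

lemma phiT_T : phiT n (T n) = Multiplicative.ofAdd (1 : ℤ) := by
  simp [T, phiT, PresentedGroup.toGroup.of]

lemma phiT_A : phiT n (A n) = 1 := by
  simp [A, phiT, PresentedGroup.toGroup.of]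

lemma phiT_Aj (j e : ℤ) : phiT n (Aj n j ^ e) = 1 := by
  rw [Aj_zpow, map_mul, map_mul, map_zpow, map_zpow, map_zpow, phiT_A, phiT_T]
  simp [← ofAdd_zsmul]

noncomputable def phiA (h : ¬ Even n) : BS n →* Multiplicative (ZMod 2) :=
  PresentedGroup.toGroup (f := fun b => Multiplicative.ofAdd (if b then (0 : ZMod 2) else 1)) (by
    intro r hr
    rw [BSrels, Set.mem_singleton_iff] at hr
    subst hr
    simp only [map_mul, map_inv, map_zpow, FreeGroup.lift_apply_of, if_true, if_false]
    simp only [← ofAdd_zsmul, ← ofAdd_neg, ← ofAdd_add]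
    rw [ofAdd_eq_one]
    obtain ⟨p, hp⟩ := Int.not_even_iff_odd.1 h
    subst hp
    have h2 : ((2 : ℤ) : ZMod 2) = 0 := by decide
    rw [zsmul_eq_mul]
    push_cast [h2]
    rw [show (2 : ZMod 2) = 0 from by decide]
    ring)

lemma phiA_mk (h : ¬ Even n) (u : FreeGroup Bool) :
    phiA n h (PresentedGroup.mk (BSrels n) u) =
      Multiplicative.ofAdd ((sigmaA u : ZMod 2)) := by
  have key : (FreeGroup.lift (fun b => Multiplicative.ofAdd (if b then (0 : ZMod 2) else 1)) :
        FreeGroup Bool →* Multiplicative (ZMod 2)) =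
      ((AddMonoidHom.toMultiplicative (Int.castAddHom (ZMod 2))).comp
        (FreeGroup.lift (fun b => Multiplicative.ofAdd (if b then (0 : ℤ) else 1)))) := by
    apply FreeGroup.ext_hom
    intro b
    cases b <;> simp [AddMonoidHom.toMultiplicative]
  show (FreeGroup.lift (fun b => Multiplicative.ofAdd (if b then (0 : ZMod 2) else 1))) u = _
  rw [key]
  rfl

lemma phiA_T (h : ¬ Even n) : phiA n h (T n) = 1 := by
  simp [T, phiA, PresentedGroup.toGroup.of]

lemma phiA_A (h : ¬ Even n) : phiA n h (A n) = Multiplicative.ofAdd (1 : ZMod 2) := by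
  simp [A, phiA, PresentedGroup.toGroup.of]

lemma phiA_Aj (h : ¬ Even n) (j e : ℤ) :
    phiA n h (Aj n j ^ e) = Multiplicative.ofAdd ((e : ZMod 2)) := by
  rw [Aj_zpow, map_mul, map_mul, map_zpow, map_zpow, map_zpow, phiA_A, phiA_T]
  simp only [one_zpow, one_mul, mul_one, ← ofAdd_zsmul, zsmul_eq_mul]

/-- Key square-decomposition lemma. -/
lemma two_squares (L e q : ℤ) (hne : Even n ∨ Even e) :
    ∃ x y : BS n, x ^ 2 * y ^ 2 = Aj n L ^ e * T n ^ (2 * q) := by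
  have key : ∀ y : BS n, y ^ 2 = Aj n (L - 2 * q) ^ e →
      (T n ^ q) ^ 2 * y ^ 2 = Aj n L ^ e * T n ^ (2 * q) := by
    intro y hy
    rw [hy, ← zpow_natCast (T n ^ q), ← zpow_mul]
    have hs := shift n (2 * q) (L - 2 * q) e
    rw [show L - 2 * q + 2 * q = L by ring] at hs
    calc T n ^ (q * (2 : ℕ)) * Aj n (L - 2 * q) ^ e
        = (T n ^ (2 * q) * Aj n (L - 2 * q) ^ e * T n ^ (-(2 * q))) * T n ^ (2 * q) := by
          rw [show q * ((2 : ℕ) : ℤ) = 2 * q by push_cast; ring]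
          group
      _ = Aj n L ^ e * T n ^ (2 * q) := by rw [hs]
  rcases hne with hn | he
  · obtain ⟨p, hp⟩ := hn
    refine ⟨T n ^ q, Aj n (L - 2 * q + 1) ^ (p * e), key _ ?_⟩
    rw [← zpow_natCast (Aj n (L - 2 * q + 1) ^ (p * e)), ← zpow_mul]
    rw [Aj_succ n (L - 2 * q), ← zpow_mul]
    congr 1
    rw [hp]; push_cast; ring
  · obtain ⟨s, hs⟩ := he
    refine ⟨T n ^ q, Aj n (L - 2 * q) ^ s, key _ ?_⟩
    rw [← zpow_natCast (Aj n (L - 2 * q) ^ s), ← zpow_mul]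
    congr 1
    rw [hs]; push_cast; ring

lemma hom_eval {H : Type*} [CommGroup H] {g k : ℕ} (φ : BS n →* H)
    (x : Fin g → BS n) (z : Fin k → BS n) (c : Fin k → BS n)
    (heq : (List.ofFn fun j => (x j) ^ 2).prod *
      (List.ofFn fun i => (z i)⁻¹ * c i * z i).prod = 1) :
    (∏ j, φ (x j)) ^ 2 * ∏ i, φ (c i) = 1 := by
  have h2 := congrArg φ heq
  rw [map_mul, map_list_prod, map_list_prod, List.map_ofFn, List.map_ofFn, map_one,
    List.prod_ofFn, List.prod_ofFn] at h2
  have e1 : ∏ j, (φ ∘ fun j => (x j) ^ 2) j = (∏ j, φ (x j)) ^ 2 := by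
    rw [← Finset.prod_pow]
    exact Finset.prod_congr rfl fun j _ => by simp [map_pow]
  have e2 : ∏ i, (φ ∘ fun i => (z i)⁻¹ * c i * z i) i = ∏ i, φ (c i) := by
    refine Finset.prod_congr rfl fun i _ => ?_
    simp only [Function.comp_apply, map_mul, map_inv]
    rw [mul_comm ((φ (z i))⁻¹) (φ (c i)), mul_assoc, inv_mul_cancel, mul_one]
  rw [e1, e2] at h2
  exact h2

lemma prod_ofFn_pair {M : Type*} [Monoid M] {m : ℕ} (f : Fin (2 + m) → M)
    (h : ∀ j : Fin (2 + m), 2 ≤ (j : ℕ) → f j = 1) :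
    (List.ofFn f).prod = f ⟨0, by omega⟩ * f ⟨1, by omega⟩ := by
  rw [List.ofFn_add, List.prod_append]
  have h1 : (List.ofFn fun j : Fin m => f (Fin.natAdd 2 j)).prod = 1 :=
    List.prod_eq_one (by
      intro a ha
      rw [List.mem_ofFn] at ha
      obtain ⟨j, rfl⟩ := ha
      exact h _ (by simp [Fin.natAdd]))
  rw [h1, mul_one]
  rw [List.ofFn_succ, List.ofFn_succ, List.ofFn_zero]
  simp only [List.prod_cons, List.prod_nil, mul_one]
  congr 1

end BSaux

open BSaux

/-- The nonorientable equation of genus `g ≥ 2` with constants `c i` (given by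
words `w i` on `{a,t}`), namely `x₁²⋯x_g² ∏_i z_i⁻¹ c_i z_i = 1`, has a solution
in BS(1,n) iff `σ_t(c₁⋯c_k)` is even and, moreover, `n` is even or
`σ_a(c₁⋯c_k)` is even. -/
theorem stmt_10 (n : ℤ) (g k : ℕ) (hg : 2 ≤ g) (w : Fin k → FreeGroup Bool)
    (c : Fin k → BS n) (hc : ∀ i, c i = PresentedGroup.mk (BSrels n) (w i)) :
    (∃ (x : Fin g → BS n) (z : Fin k → BS n),
        (List.ofFn fun j => (x j) ^ 2).prod *
          (List.ofFn fun i => (z i)⁻¹ * c i * z i).prod = 1) ↔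
      Even (sigmaT (List.ofFn w).prod) ∧
        (Even n ∨ Even (sigmaA (List.ofFn w).prod)) := by
  have hc' : c = fun i => PresentedGroup.mk (BSrels n) (w i) := funext hc
  subst hc'
  set W : FreeGroup Bool := (List.ofFn w).prod with hW
  have hCW : (List.ofFn fun i => PresentedGroup.mk (BSrels n) (w i)).prod
      = PresentedGroup.mk (BSrels n) W := by
    rw [hW, map_list_prod, List.map_ofFn]
    rfl
  have hsT : sigmaT W = Multiplicative.toAdd (phiT n (PresentedGroup.mk (BSrels n) W)) := rfl
  constructor
  · rintro ⟨x, z, heq⟩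
    have key : ∀ {H : Type} [CommGroup H] (φ : BS n →* H),
        (∏ j, φ (x j)) ^ 2 * φ (PresentedGroup.mk (BSrels n) W) = 1 := by
      intro H _ φ
      have h2 := hom_eval n φ x z _ heq
      rwa [show ∏ i, φ (PresentedGroup.mk (BSrels n) (w i))
          = φ (PresentedGroup.mk (BSrels n) W) by
        rw [← hCW, map_list_prod, List.map_ofFn, List.prod_ofFn]
        rfl] at h2
    constructor
    · have h2 := key (phiT n)
      have h3 : phiT n (PresentedGroup.mk (BSrels n) W) = ((∏ j, phiT n (x j))⁻¹) ^ 2 := by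
        rw [inv_pow]
        exact eq_inv_of_mul_eq_one_left (by rwa [mul_comm] at h2)
      refine ⟨Multiplicative.toAdd ((∏ j, phiT n (x j))⁻¹), ?_⟩
      rw [hsT, h3, sq, toAdd_mul]
    · by_cases hn : Even n
      · exact Or.inl hn
      · right
        have h2 := key (phiA n hn)
        rw [phiA_mk] at h2
        have h3 : Multiplicative.ofAdd ((sigmaA W : ZMod 2))
            = ((∏ j, phiA n hn (x j))⁻¹) ^ 2 := by
          rw [inv_pow]
          exact eq_inv_of_mul_eq_one_left (by rwa [mul_comm] at h2)
        have h4 : ((sigmaA W : ZMod 2)) = 0 := by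
          have := congrArg Multiplicative.toAdd h3
          rw [toAdd_ofAdd, sq, toAdd_mul] at this
          rw [this]
          exact (by decide : ∀ r : ZMod 2, r + r = 0) _
        rw [even_iff_two_dvd]
        exact (ZMod.intCast_zmod_eq_zero_iff_dvd _ 2).1 h4
  · rintro ⟨⟨q, hq⟩, hpar⟩
    obtain ⟨L, e, m, hLem⟩ := decomp n W
    have hm : m = sigmaT W := by
      have h1 := congrArg (phiT n) hLem
      rw [map_mul, phiT_Aj, one_mul, map_zpow, phiT_T] at h1
      rw [hsT, h1]
      simp [← ofAdd_zsmul]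
    have hpar2 : Even n ∨ Even e := by
      rcases hpar with hn | ha
      · exact Or.inl hn
      · by_cases hn : Even n
        · exact Or.inl hn
        · right
          have h1 := congrArg (phiA n hn) hLem
          rw [phiA_mk, map_mul, phiA_Aj, map_zpow, phiA_T, one_zpow, mul_one] at h1
          have h2 : ((sigmaA W : ZMod 2)) = ((e : ZMod 2)) := by
            have := congrArg Multiplicative.toAdd h1
            simpa using this
          have h4 : ((e : ZMod 2)) = 0 := by
            rw [← h2]
            rw [even_iff_two_dvd] at ha
            exact (ZMod.intCast_zmod_eq_zero_iff_dvd _ 2).2 ha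
          rw [even_iff_two_dvd]
          exact (ZMod.intCast_zmod_eq_zero_iff_dvd _ 2).1 h4
    obtain ⟨x0, y0, hxy⟩ := two_squares n (L - m) (-e) (-q) (hpar2.imp id Even.neg)
    have hinv : x0 ^ 2 * y0 ^ 2 = (PresentedGroup.mk (BSrels n) W)⁻¹ := by
      rw [hxy, hLem, mul_inv_rev, ← zpow_neg, ← zpow_neg]
      have hs := shift n (-m) L (-e)
      have hmq : 2 * (-q) = -m := by rw [hm, hq]; ring
      rw [show L - m = L + (-m) by ring, hmq, ← hs]
      group
    obtain ⟨m', rfl⟩ := Nat.exists_eq_add_of_le hg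
    refine ⟨fun j : Fin (2 + m') =>
      if (j : ℕ) = 0 then x0 else if (j : ℕ) = 1 then y0 else 1, fun _ => 1, ?_⟩
    have hx : (List.ofFn fun j : Fin (2 + m') =>
        (if (j : ℕ) = 0 then x0 else if (j : ℕ) = 1 then y0 else 1) ^ 2).prod
        = x0 ^ 2 * y0 ^ 2 := by
      rw [prod_ofFn_pair (M := BS n)
        (f := fun j : Fin (2 + m') =>
          (if (j : ℕ) = 0 then x0 else if (j : ℕ) = 1 then y0 else 1) ^ 2)
        (h := by
          intro j hj
          have h0 : ¬ ((j : ℕ) = 0) := by omega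
          have h1 : ¬ ((j : ℕ) = 1) := by omega
          simp [h0, h1])]
      norm_num
    have hz : (List.ofFn fun i => (1 : BS n)⁻¹ * PresentedGroup.mk (BSrels n) (w i) * 1).prod
        = PresentedGroup.mk (BSrels n) W := by
      rw [← hCW]
      simp
    rw [hx, hz, hinv, inv_mul_cancel]
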